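/- RCPS with a valid upper confidence bound controls a general (possibly non-monotonic) risk: let R : Q_grid → ℝ be a risk function on a finite ordered grid q₁,…,q_M, and let R̂⁺(q) be random upper bounds satisfying P(R(q) ≤ R̂⁺(q)) ≥ 1 − δ for each fixed q. Define q̂ as the last grid point q_k such that R̂⁺(q_j) < α for all j ≤ k (and q̂ undefined/initial if R̂⁺(q₁) ≥ α). Then P(R(q̂) ≤ α, whenever q̂ is defined) ≥ 1 − δ. -/
import Mathlib


open MeasureTheory

/-- RCPS with a marginally valid upper confidence bound controls a general (possibly
non-monotonic) risk: on a finite ordered grid `q_0, …, q_{M-1}` with risks `R j` and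
level-`δ` upper confidence bounds `R̂⁺ j`, let `q̂` be the last grid point `k` such that
`R̂⁺ j < α` for all `j ≤ k` (undefined if `R̂⁺ 0 ≥ α`). Then with probability at least
`1 − δ`, whenever `q̂` is defined the selected point satisfies `R(q̂) ≤ α`. -/
theorem rcps_controls_general_risk
    {Ω : Type*} [MeasurableSpace Ω] (μ : Measure Ω) [IsProbabilityMeasure μ]
    (M : ℕ) (R : Fin M → ℝ) (Rhat : Fin M → Ω → ℝ)
    (hRhatMeas : ∀ j, Measurable (Rhat j))
    (α δ : ℝ) (hα : 0 < α) (hα' : α < 1) (hδ : 0 < δ) (hδ' : δ < 1)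
    (hUCB : ∀ j, 1 - ENNReal.ofReal δ ≤ μ {ω | R j ≤ Rhat j ω}) :
    1 - ENNReal.ofReal δ ≤
      μ {ω | ∀ k : Fin M,
        ((∀ j ≤ k, Rhat j ω < α) ∧ ∀ k' > k, ¬ (∀ j ≤ k', Rhat j ω < α)) → R k ≤ α} := by
  by_cases h : ∃ j : Fin M, α < R j
  · -- let J be the first index with R J > α
    set S : Finset (Fin M) := Finset.univ.filter (fun j => α < R j) with hS
    have hSne : S.Nonempty := by
      obtain ⟨j, hj⟩ := h
      exact ⟨j, by simp [hS, hj]⟩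
    set J := S.min' hSne with hJ
    have hJmem : α < R J := by
      have := S.min'_mem hSne
      simpa [hS] using this
    refine le_trans (hUCB J) (measure_mono ?_)
    intro ω hω k hk
    by_contra hRk
    push_neg at hRk
    have hJle : J ≤ k := S.min'_le k (by simp [hS, hRk])
    have := hk.1 J hJle
    have : (Rhat J ω : ℝ) < α := this
    have hge : R J ≤ Rhat J ω := hω
    linarith
  · push_neg at h
    have : {ω : Ω | ∀ k : Fin M,
        ((∀ j ≤ k, Rhat j ω < α) ∧ ∀ k' > k, ¬ (∀ j ≤ k', Rhat j ω < α)) → R k ≤ α}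
        = Set.univ := by
      ext ω; simp only [Set.mem_setOf_eq, Set.mem_univ, iff_true]
      exact fun k _ => h k
    rw [this, measure_univ]
    exact tsub_le_self.trans le_rfl
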